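/- Let (Ω,S) be a schurian scheme that is equivalenced of valency k > 1 with indistinguishing number c(s) = k−1 for all s ∈ S# (i.e. pseudocyclic of valency k), and suppose its rank |S| is greater than 2(k−1). Then the automorphism group Aut(Ω,S) = {f ∈ Sym(Ω) : s^f = s for all s ∈ S} is a Frobenius group, and S is the set of orbits of Aut(Ω,S) on Ω×Ω; in particular (Ω,S) is a Frobenius scheme. -/

import Mathlib

open scoped Classical

namespace AS

variable {Ω : Type*}

/-- The diagonal relation `1_Ω`. -/
def diagRel (Ω : Type*) : Set (Ω × Ω) := {p | p.1 = p.2}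

/-- The converse `s*` of a relation. -/
def conv (s : Set (Ω × Ω)) : Set (Ω × Ω) := {p | (p.2, p.1) ∈ s}

/-- Composition `r ∘ s` of relations. -/
def comp (r s : Set (Ω × Ω)) : Set (Ω × Ω) :=
  {p | ∃ β, (p.1, β) ∈ r ∧ (β, p.2) ∈ s}

/-- `αs = {β | (α, β) ∈ s}`. -/
def pointSet (α : Ω) (s : Set (Ω × Ω)) : Set Ω := {β | (α, β) ∈ s}

/-- The number of `β` with `(p.1, β) ∈ r` and `(β, p.2) ∈ s`. -/
noncomputable def pNum (r s : Set (Ω × Ω)) (p : Ω × Ω) : ℕ :=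
  Set.ncard {β | (p.1, β) ∈ r ∧ (β, p.2) ∈ s}

/-- A coherent configuration on `Ω`. -/
structure IsCC (S : Set (Set (Ω × Ω))) : Prop where
  cover : ∀ p : Ω × Ω, ∃ s ∈ S, p ∈ s
  disjoint : ∀ s ∈ S, ∀ t ∈ S, (s ∩ t).Nonempty → s = t
  nonempty : ∀ s ∈ S, s.Nonempty
  diag_union : ∀ s ∈ S, (s ∩ diagRel Ω).Nonempty → s ⊆ diagRel Ω
  conv_mem : ∀ s ∈ S, conv s ∈ S
  inter_indep : ∀ r ∈ S, ∀ s ∈ S, ∀ t ∈ S, ∀ p ∈ t, ∀ q ∈ t, pNum r s p = pNum r s q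

/-- A (homogeneous) scheme. -/
def IsScheme (S : Set (Set (Ω × Ω))) : Prop := IsCC S ∧ diagRel Ω ∈ S

/-- The intersection number `c_{rs}^t` (for `t` a nonempty class this is well defined). -/
noncomputable def cNum (r s t : Set (Ω × Ω)) : ℕ :=
  if h : t.Nonempty then pNum r s h.choose else 0

/-- The indistinguishing number `c(s) = Σ_{t ∈ S} c_{t t*}^s`. -/
noncomputable def indis (S : Set (Set (Ω × Ω))) (s : Set (Ω × Ω)) : ℕ :=
  ∑ᶠ t ∈ S, cNum t (conv t) s

/-- Equivalenced of valency `k`. -/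
def IsEquivalenced (S : Set (Set (Ω × Ω))) (k : ℕ) : Prop :=
  ∀ s ∈ S, s ≠ diagRel Ω → ∀ α : Ω, (pointSet α s).ncard = k

/-- Commutativity of a scheme: `c_{rs}^t = c_{sr}^t`. -/
def IsCommutativeCC (S : Set (Set (Ω × Ω))) : Prop :=
  ∀ r ∈ S, ∀ s ∈ S, ∀ t ∈ S, cNum r s t = cNum s r t

/-- The splitting set `D(u,v)`. -/
def splitting (S : Set (Set (Ω × Ω))) (u v : Set (Ω × Ω)) : Set (Set (Ω × Ω)) :=
  {w | w ∈ S ∧ w ≠ diagRel Ω ∧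
    ∀ t ∈ S, t ⊆ comp (comp u (conv u)) (comp v (conv v)) →
      t ⊆ comp w (conv w) → t = diagRel Ω}

section Matrices

variable [Fintype Ω]

/-- Adjacency matrix of a relation. -/
noncomputable def adjMat (s : Set (Ω × Ω)) : Matrix Ω Ω ℂ :=
  Matrix.of fun a b => if (a, b) ∈ s then 1 else 0

/-- The adjacency algebra `ℂS` (as a submodule of matrices). -/
noncomputable def adjAlg (S : Set (Set (Ω × Ω))) : Submodule ℂ (Matrix Ω Ω ℂ) :=
  Submodule.span ℂ (adjMat '' S)

/-- Central idempotent of the adjacency algebra. -/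
def IsCentralIdem (S : Set (Set (Ω × Ω))) (P : Matrix Ω Ω ℂ) : Prop :=
  P ∈ adjAlg S ∧ P * P = P ∧ ∀ A ∈ adjAlg S, P * A = A * P

/-- Central primitive idempotent of the adjacency algebra. -/
def IsCPI (S : Set (Set (Ω × Ω))) (P : Matrix Ω Ω ℂ) : Prop :=
  IsCentralIdem S P ∧ P ≠ 0 ∧
  ∀ Q R : Matrix Ω Ω ℂ, IsCentralIdem S Q → IsCentralIdem S R →
    Q ≠ 0 → R ≠ 0 → Q * R = 0 → P ≠ Q + R

/-- The principal idempotent `P₀ = |Ω|⁻¹ J`. -/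
noncomputable def P0 (Ω : Type*) [Fintype Ω] : Matrix Ω Ω ℂ :=
  (Fintype.card Ω : ℂ)⁻¹ • Matrix.of fun _ _ => (1 : ℂ)

/-- `n_P`, the positive integer with `n_P² = dim_ℂ (P·ℂS)`. -/
noncomputable def nP (S : Set (Set (Ω × Ω))) (P : Matrix Ω Ω ℂ) : ℕ :=
  Nat.sqrt (Module.finrank ℂ (Submodule.map (LinearMap.mulLeft ℂ P) (adjAlg S)))

/-- `m_P = rank(P)/n_P`. -/
noncomputable def mP (S : Set (Set (Ω × Ω))) (P : Matrix Ω Ω ℂ) : ℕ :=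
  P.rank / nP S P

/-- Pseudocyclic: `m_P/n_P` is the same for all central primitive idempotents `P ≠ P₀`. -/
def IsPseudocyclic (S : Set (Set (Ω × Ω))) : Prop :=
  ∀ P Q : Matrix Ω Ω ℂ, IsCPI S P → IsCPI S Q → P ≠ P0 Ω → Q ≠ P0 Ω →
    (mP S P : ℚ) * (nP S Q : ℚ) = (mP S Q : ℚ) * (nP S P : ℚ)

end Matrices

/-- The set of orbits of `G` on `Ω × Ω` (componentwise action): the scheme of `G`. -/
def orbitScheme (G : Type*) (Ω : Type*) [Group G] [MulAction G Ω] : Set (Set (Ω × Ω)) :=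
  Set.range fun p : Ω × Ω => MulAction.orbit G p

/-- A Frobenius permutation group: transitive, non-regular, trivial two-point stabilizers. -/
def IsFrobenius (G : Type*) (Ω : Type*) [Group G] [MulAction G Ω] : Prop :=
  MulAction.IsPretransitive G Ω ∧
  (∃ g : G, g ≠ 1 ∧ ∃ ω : Ω, g • ω = ω) ∧
  ∀ g : G, ∀ a b : Ω, a ≠ b → g • a = a → g • b = b → g = 1

/-- Schurian scheme: the orbit scheme of some permutation group on `Ω`. -/
def IsSchurian (S : Set (Set (Ω × Ω))) : Prop :=
  ∃ G : Subgroup (Equiv.Perm Ω), S = orbitScheme G Ω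

/-- Algebraic isomorphism of coherent configurations. -/
def IsAlgIso {Ω' : Type*} (S : Set (Set (Ω × Ω))) (S' : Set (Set (Ω' × Ω')))
    (φ : Set (Ω × Ω) → Set (Ω' × Ω')) : Prop :=
  Set.BijOn φ S S' ∧
  ∀ r ∈ S, ∀ s ∈ S, ∀ t ∈ S, cNum (φ r) (φ s) (φ t) = cNum r s t

/-- Separability of a coherent configuration. -/
def IsSeparable {Ω : Type u} (S : Set (Set (Ω × Ω))) : Prop :=
  ∀ (Ω' : Type u) (S' : Set (Set (Ω' × Ω'))), IsCC S' →
    ∀ φ : Set (Ω × Ω) → Set (Ω' × Ω'), IsAlgIso S S' φ →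
      ∃ f : Ω → Ω', Function.Bijective f ∧
        ∀ s ∈ S, φ s = (fun p : Ω × Ω => (f p.1, f p.2)) '' s

/-- `T` refines `S`: every class of `S` is a union of classes of `T`. -/
def Refines (T S : Set (Set (Ω × Ω))) : Prop :=
  ∀ t ∈ T, ∀ s ∈ S, (t ∩ s).Nonempty → t ⊆ s

/-- `T` is the `α`-extension of `S`. -/
def IsExtension (S : Set (Set (Ω × Ω))) (α : Ω) (T : Set (Set (Ω × Ω))) : Prop :=
  IsCC T ∧ ({(α, α)} : Set (Ω × Ω)) ∈ T ∧ Refines T S ∧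
    ∀ T' : Set (Set (Ω × Ω)), IsCC T' → ({(α, α)} : Set (Ω × Ω)) ∈ T' →
      Refines T' S → Refines T' T

/-- Semiregular coherent configuration: `|αs| ≤ 1`. -/
def IsSemiregular (T : Set (Set (Ω × Ω))) : Prop :=
  ∀ t ∈ T, ∀ β : Ω, (pointSet β t).Subsingleton

/-- `1_Δ`, the diagonal of a subset. -/
def diagOn (Δ : Set Ω) : Set (Ω × Ω) := {p | p.1 = p.2 ∧ p.1 ∈ Δ}

/-- `C` is a partition of `A`. -/
def IsPartitionOf {X : Type*} (C : Set (Set X)) (A : Set X) : Prop :=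
  (∀ c ∈ C, c.Nonempty) ∧ (∀ c ∈ C, c ⊆ A) ∧ (∀ p ∈ A, ∃ c ∈ C, p ∈ c) ∧
  ∀ c ∈ C, ∀ d ∈ C, (c ∩ d).Nonempty → c = d

/-- `S(x,y) = {s ∩ (α₀x × α₀y) : s ∈ S, s ⊆ x*∘y}`. -/
def localS (S : Set (Set (Ω × Ω))) (α₀ : Ω) (x y : Set (Ω × Ω)) : Set (Set (Ω × Ω)) :=
  {r | ∃ s ∈ S, s ⊆ comp (conv x) y ∧ r = s ∩ (pointSet α₀ x ×ˢ pointSet α₀ y)}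

/-- `S(x,y;w) = S(x,w)·S(w,y)`. -/
def localSW (S : Set (Set (Ω × Ω))) (α₀ : Ω) (x y w : Set (Ω × Ω)) : Set (Set (Ω × Ω)) :=
  {r | ∃ a ∈ localS S α₀ x w, ∃ b ∈ localS S α₀ w y, r = comp a b}



section AuxLemmas

variable {Ω : Type*}

lemma aux_ncard_biUnion_le {ι : Type*} [Fintype Ω] (s : Finset ι) (f : ι → Set Ω) :
    (⋃ i ∈ s, f i).ncard ≤ ∑ i ∈ s, (f i).ncard := by
  classical
  induction s using Finset.induction with
  | empty => simp
  | insert a s' h ih =>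
    rw [Finset.sum_insert h, Finset.set_biUnion_insert]
    exact le_trans (Set.ncard_union_le _ _) (by gcongr)

/-- The automorphism group of a set of relations. -/
def autGroup (S : Set (Set (Ω × Ω))) : Subgroup (Equiv.Perm Ω) where
  carrier := {f | ∀ s ∈ S, (fun p : Ω × Ω => (f p.1, f p.2)) '' s = s}
  one_mem' := by intro s _; simp
  mul_mem' := by
    intro f g hf hg s hs
    have : (fun p : Ω × Ω => ((f * g) p.1, (f * g) p.2))
        = (fun p : Ω × Ω => (f p.1, f p.2)) ∘ (fun p : Ω × Ω => (g p.1, g p.2)) := rfl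
    rw [this, Set.image_comp, hg s hs, hf s hs]
  inv_mem' := by
    intro f hf s hs
    have h1 := hf s hs
    have h2 : (fun p : Ω × Ω => (f⁻¹ p.1, f⁻¹ p.2)) ∘ (fun p : Ω × Ω => (f p.1, f p.2))
        = id := by
      funext p; simp
    calc (fun p : Ω × Ω => (f⁻¹ p.1, f⁻¹ p.2)) '' s
        = (fun p : Ω × Ω => (f⁻¹ p.1, f⁻¹ p.2)) '' ((fun p : Ω × Ω => (f p.1, f p.2)) '' s) := by
          rw [h1]
      _ = s := by rw [← Set.image_comp, h2, Set.image_id]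

lemma aux_mem_of_mem {f : Equiv.Perm Ω} {s : Set (Ω × Ω)}
    (h : (fun p : Ω × Ω => (f p.1, f p.2)) '' s = s) {p : Ω × Ω} (hp : p ∈ s) :
    (f p.1, f p.2) ∈ s := by
  have h2 : (f p.1, f p.2) ∈ (fun p : Ω × Ω => (f p.1, f p.2)) '' s := ⟨p, hp, rfl⟩
  rwa [h] at h2

/-- Key fixed-point bound: a nontrivial automorphism fixes at most `k - 1` points. -/
lemma aux_fixed_le [Fintype Ω] {S : Set (Set (Ω × Ω))} (hS : IsScheme S) {k : ℕ}
    (hindis : ∀ s ∈ S, s ≠ diagRel Ω → indis S s = k - 1)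
    (g : Equiv.Perm Ω) (hg : ∀ s ∈ S, (fun p : Ω × Ω => (g p.1, g p.2)) '' s = s)
    (hg1 : g ≠ 1) : {x : Ω | g x = x}.ncard ≤ k - 1 := by
  classical
  obtain ⟨δ, hδ⟩ : ∃ δ : Ω, g δ ≠ δ := by
    by_contra h; push_neg at h; exact hg1 (Equiv.ext h)
  obtain ⟨s, hsS, hps⟩ := hS.1.cover (δ, g δ)
  have hsd : s ≠ diagRel Ω := by
    intro h; rw [h] at hps; exact hδ hps.symm
  have hSfin : S.Finite := Set.toFinite S
  -- the sets Bt
  set B : Set (Ω × Ω) → Set Ω := fun t => {β | (δ, β) ∈ t ∧ (g δ, β) ∈ t} with hB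
  have hc : ∀ t ∈ S, cNum t (conv t) s = (B t).ncard := by
    intro t ht
    have hne : s.Nonempty := hS.1.nonempty s hsS
    rw [cNum, dif_pos hne]
    have := hS.1.inter_indep t ht (conv t) (hS.1.conv_mem t ht) s hsS
      hne.choose hne.choose_spec (δ, g δ) hps
    rw [this]
    rfl
  have hsum : indis S s = ∑ t ∈ hSfin.toFinset, (B t).ncard := by
    have h1 : ∑ᶠ t ∈ (↑hSfin.toFinset : Set (Set (Ω × Ω))), (B t).ncard
        = ∑ t ∈ hSfin.toFinset, (B t).ncard := finsum_mem_coe_finset _ _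
    rw [hSfin.coe_toFinset] at h1
    rw [indis, ← h1]
    exact finsum_mem_congr rfl hc
  have hsub : {x : Ω | g x = x} ⊆ ⋃ t ∈ hSfin.toFinset, B t := by
    intro γ hγ
    obtain ⟨t, htS, hpt⟩ := hS.1.cover (δ, γ)
    refine Set.mem_biUnion (hSfin.mem_toFinset.mpr htS) ⟨hpt, ?_⟩
    have h3 := aux_mem_of_mem (hg t htS) hpt
    have hγ' : g γ = γ := hγ
    rwa [hγ'] at h3
  calc {x : Ω | g x = x}.ncard ≤ (⋃ t ∈ hSfin.toFinset, B t).ncard :=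
        Set.ncard_le_ncard hsub (Set.toFinite _)
    _ ≤ ∑ t ∈ hSfin.toFinset, (B t).ncard := aux_ncard_biUnion_le _ _
    _ = indis S s := hsum.symm
    _ = k - 1 := hindis s hsS hsd

end AuxLemmas

theorem stmt_7 {Ω : Type*} [Fintype Ω] (S : Set (Set (Ω × Ω))) (hS : IsScheme S)
    (hschur : IsSchurian S) (k : ℕ) (hk : 1 < k) (heq : IsEquivalenced S k)
    (hindis : ∀ s ∈ S, s ≠ diagRel Ω → indis S s = k - 1)
    (hrank : 2 * (k - 1) < S.ncard) :
    ∃ G : Subgroup (Equiv.Perm Ω),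
      (∀ f : Equiv.Perm Ω, f ∈ G ↔ ∀ s ∈ S, (fun p : Ω × Ω => (f p.1, f p.2)) '' s = s) ∧
      IsFrobenius G Ω ∧ S = orbitScheme G Ω := by
  classical
  obtain ⟨G₀, hG₀⟩ := hschur
  set A : Subgroup (Equiv.Perm Ω) := autGroup S with hA
  have hmemA : ∀ f : Equiv.Perm Ω, f ∈ A ↔
      ∀ s ∈ S, (fun p : Ω × Ω => (f p.1, f p.2)) '' s = s := fun f => Iff.rfl
  have hSfin : S.Finite := Set.toFinite S
  -- each class is the G₀-orbit of any of its points
  have h1 : ∀ s ∈ S, ∀ p ∈ s, MulAction.orbit G₀ p = s := by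
    intro s hs p hp
    rw [hG₀] at hs
    obtain ⟨q, hq⟩ := hs
    rw [← hq] at hp ⊢
    exact MulAction.orbit_eq_iff.mpr hp
  -- G₀ is contained in A
  have h2 : ∀ g : Equiv.Perm Ω, g ∈ G₀ → g ∈ A := by
    intro g hg s hs
    obtain ⟨p, hp⟩ := hS.1.nonempty s hs
    rw [← h1 s hs p hp]
    ext q
    constructor
    · rintro ⟨r, ⟨u, rfl⟩, rfl⟩
      exact ⟨(⟨g, hg⟩ : G₀) * u, rfl⟩
    · rintro ⟨u, rfl⟩
      refine ⟨((⟨g, hg⟩ : G₀)⁻¹ * u) • p, ⟨_, rfl⟩, ?_⟩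
      show (g _, g _) = _
      simp only [Prod.smul_fst, Prod.smul_snd]
      show (g (g⁻¹ ((u • p).1)), g (g⁻¹ ((u • p).2))) = u • p
      simp
      rfl
  -- transitivity
  have htrans : ∀ x y : Ω, ∃ a : Equiv.Perm Ω, a ∈ A ∧ a x = y := by
    intro x y
    have hd : diagRel Ω ∈ orbitScheme G₀ Ω := hG₀ ▸ hS.2
    obtain ⟨q, hq⟩ := hd
    have hq' : MulAction.orbit G₀ q = diagRel Ω := hq
    have hu : (x, x) ∈ MulAction.orbit G₀ q := by rw [hq']; exact rfl
    have hv : (y, y) ∈ MulAction.orbit G₀ q := by rw [hq']; exact rfl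
    obtain ⟨u, hu⟩ := hu
    obtain ⟨v, hv⟩ := hv
    have hux : (u : Equiv.Perm Ω) q.1 = x := congrArg Prod.fst hu
    have hvy : (v : Equiv.Perm Ω) q.1 = y := congrArg Prod.fst hv
    refine ⟨(v : Equiv.Perm Ω) * (u : Equiv.Perm Ω)⁻¹,
      mul_mem (h2 _ v.2) (inv_mem (h2 _ u.2)), ?_⟩
    show (v : Equiv.Perm Ω) ((u : Equiv.Perm Ω)⁻¹ x) = y
    rw [← hux]
    simp [hvy]
  have htransA : MulAction.IsPretransitive A Ω := by
    constructor
    intro x y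
    obtain ⟨a, ha, hax⟩ := htrans x y
    exact ⟨⟨a, ha⟩, hax⟩
  -- each class is an A-orbit
  have h4 : ∀ s ∈ S, ∀ p ∈ s, MulAction.orbit A p = s := by
    intro s hs p hp
    apply Set.Subset.antisymm
    · rintro q ⟨u, rfl⟩
      exact aux_mem_of_mem (u.2 s hs) hp
    · rw [← h1 s hs p hp]
      rintro q ⟨u, rfl⟩
      exact ⟨⟨(u : Equiv.Perm Ω), h2 _ u.2⟩, rfl⟩
  -- S is the orbit scheme of A
  have h5 : S = orbitScheme A Ω := by
    ext s
    constructor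
    · intro hs
      obtain ⟨p, hp⟩ := hS.1.nonempty s hs
      exact ⟨p, h4 s hs p hp⟩
    · rintro ⟨p, rfl⟩
      obtain ⟨t, ht, hpt⟩ := hS.1.cover p
      show MulAction.orbit A p ∈ S
      rw [h4 t ht p hpt]; exact ht
  -- basic numerology
  have hr3 : 3 ≤ S.ncard := by omega
  have hSne : S.Nonempty := by
    rcases S.eq_empty_or_nonempty with h | h
    · rw [h] at hr3; simp [Set.ncard_empty] at hr3
    · exact h
  -- a nondiagonal class exists
  have hsn : ∃ s ∈ S, s ≠ diagRel Ω := by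
    by_contra h
    push_neg at h
    have : S ⊆ {diagRel Ω} := fun s hs => h s hs
    have := Set.ncard_le_ncard this (Set.finite_singleton _)
    rw [Set.ncard_singleton] at this
    omega
  obtain ⟨sn, hsnS, hsnd⟩ := hsn
  obtain ⟨p₀, hp₀⟩ := hS.1.nonempty sn hsnS
  -- Frobenius condition 2 : a nontrivial element with a fixed point
  have hcond2 : ∃ g : A, g ≠ 1 ∧ ∃ ω : Ω, g • ω = ω := by
    set α := p₀.1
    have hcard : 1 < (pointSet α sn).ncard := by rw [heq sn hsnS hsnd α]; exact hk
    obtain ⟨β, hβ, γ, hγ, hβγ⟩ := (Set.one_lt_ncard (Set.toFinite _)).mp hcard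
    have : (α, γ) ∈ MulAction.orbit A (α, β) := by
      rw [h4 sn hsnS (α, β) hβ]; exact hγ
    obtain ⟨u, hu⟩ := this
    have hu1 : (u : Equiv.Perm Ω) α = α := congrArg Prod.fst hu
    have hu2 : (u : Equiv.Perm Ω) β = γ := congrArg Prod.snd hu
    refine ⟨u, ?_, α, hu1⟩
    intro h
    rw [h] at hu2
    exact hβγ (hu2 ▸ rfl)
  -- Frobenius condition 3 : trivial two-point stabilizers
  have hcond3 : ∀ g : A, ∀ a b : Ω, a ≠ b → g • a = a → g • b = b → g = 1 := by
    intro g a b hab ha hb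
    by_contra hg1
    have hgP : (g : Equiv.Perm Ω) ≠ 1 := fun h => hg1 (Subtype.ext h)
    set H := MulAction.stabilizer A a with hH
    obtain ⟨s, hsS, hpab⟩ := hS.1.cover (a, b)
    have hsd : s ≠ diagRel Ω := by
      intro h; rw [h] at hpab; exact hab hpab
    -- the H-orbit of b is pointSet a s
    have horb : MulAction.orbit H b = pointSet a s := by
      ext β
      constructor
      · rintro ⟨u, rfl⟩
        have h6 := aux_mem_of_mem ((u : A).2 s hsS) hpab
        have h7 : ((u : A) : Equiv.Perm Ω) a = a := u.2
        show (a, u • b) ∈ s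
        have h8 : (a, u • b) = (((u : A) : Equiv.Perm Ω) a, ((u : A) : Equiv.Perm Ω) b) := by
          rw [h7]; rfl
        rw [h8]; exact h6
      · intro hβ
        have h8 : (a, β) ∈ MulAction.orbit A (a, b) := by
          rw [h4 s hsS (a, b) hpab]; exact hβ
        obtain ⟨u, hu⟩ := h8
        have hu1 : (u : Equiv.Perm Ω) a = a := congrArg Prod.fst hu
        exact ⟨⟨u, MulAction.mem_stabilizer_iff.mpr hu1⟩, congrArg Prod.snd hu⟩
    -- Fintype instances
    letI : Fintype A := Fintype.ofFinite _
    letI : Fintype H := Fintype.ofFinite _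
    letI : Fintype (MulAction.orbit H b) := Fintype.ofFinite _
    letI : Fintype (MulAction.stabilizer H b) := Fintype.ofFinite _
    letI : Fintype (Quotient (MulAction.orbitRel H Ω)) := Fintype.ofFinite _
    letI : ∀ h : H, Fintype (MulAction.fixedBy Ω h) := fun h => Fintype.ofFinite _
    set m := Fintype.card H with hm
    have horbcard : Fintype.card (MulAction.orbit H b) = k := by
      rw [← Nat.card_eq_fintype_card, Nat.card_coe_set_eq, horb]
      exact heq s hsS hsd a
    have hos := MulAction.card_orbit_mul_card_stabilizer_eq_card_group H b
    rw [horbcard] at hos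
    -- the two-point stabilizer contains g, hence has at least 2 elements
    have hstab2 : 2 ≤ Fintype.card (MulAction.stabilizer H b) := by
      have hgH : g ∈ H := MulAction.mem_stabilizer_iff.mpr ha
      have hgHb : (⟨g, hgH⟩ : H) ∈ MulAction.stabilizer H b :=
        MulAction.mem_stabilizer_iff.mpr hb
      refine Fintype.one_lt_card_iff_nontrivial.mpr ⟨⟨⟨⟨g, hgH⟩, hgHb⟩, 1, ?_⟩⟩
      intro h
      apply hg1
      have h9 := congrArg (fun x : MulAction.stabilizer H b => ((x : H) : A)) h
      exact h9
    have hm2k : 2 * k ≤ m := by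
      calc 2 * k = k * 2 := by ring
        _ ≤ k * Fintype.card (MulAction.stabilizer H b) := Nat.mul_le_mul_left _ hstab2
        _ = m := hos
    -- at least S.ncard orbits of H on Ω
    have hβs : ∀ s' ∈ S, ∃ β : Ω, (a, β) ∈ s' := by
      intro s' hs'
      obtain ⟨p, hp⟩ := hS.1.nonempty s' hs'
      obtain ⟨u, huA, hux⟩ := htrans p.1 a
      have h10 := aux_mem_of_mem (huA s' hs') hp
      exact ⟨u p.2, by rwa [hux] at h10⟩
    have hΩne : Nonempty Ω := ⟨a⟩
    choose! β hβ using hβs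
    have hrN : S.ncard ≤ Fintype.card (Quotient (MulAction.orbitRel H Ω)) := by
      rw [← Nat.card_coe_set_eq, ← Nat.card_eq_fintype_card]
      apply Nat.card_le_card_of_injective
        (f := fun s' : S => (Quotient.mk (MulAction.orbitRel H Ω) (β (s' : Set (Ω × Ω)))))
      intro s' t' h
      have hrel : β (s' : Set (Ω × Ω)) ∈ MulAction.orbit H (β (t' : Set (Ω × Ω))) :=
        Quotient.exact h
      obtain ⟨u, hu⟩ := hrel
      have h7 : ((u : A) : Equiv.Perm Ω) a = a := u.2
      have h11 := aux_mem_of_mem ((u : A).2 (t' : Set (Ω × Ω)) t'.2) (hβ _ t'.2)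
      rw [h7] at h11
      have h12 : ((u : A) : Equiv.Perm Ω) (β (t' : Set (Ω × Ω))) = β (s' : Set (Ω × Ω)) := hu
      rw [h12] at h11
      have h13 := hS.1.disjoint _ s'.2 _ t'.2 ⟨(a, β (s' : Set (Ω × Ω))), hβ _ s'.2, h11⟩
      exact Subtype.ext h13
    -- Burnside
    have hburn := MulAction.sum_card_fixedBy_eq_card_orbits_mul_card_group (↥H) Ω
    -- bound on the sum of fixed points
    have hsum_le : ∑ h : H, Fintype.card (MulAction.fixedBy Ω h)
        ≤ Fintype.card Ω + (m - 1) * (k - 1) := by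
      rw [← Finset.sum_erase_add _ _ (Finset.mem_univ (1 : H))]
      have h1card : Fintype.card (MulAction.fixedBy Ω (1 : H)) = Fintype.card Ω := by
        have h14 : MulAction.fixedBy Ω (1 : H) = Set.univ := by
          ext x; simp [MulAction.fixedBy]
        rw [← Nat.card_eq_fintype_card, Nat.card_coe_set_eq, h14, Set.ncard_univ,
          Nat.card_eq_fintype_card]
      rw [h1card]
      have h15 : ∑ h ∈ Finset.univ.erase (1 : H), Fintype.card (MulAction.fixedBy Ω h)
          ≤ (m - 1) * (k - 1) := by
        have hcard : (Finset.univ.erase (1 : H)).card = m - 1 := by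
          rw [Finset.card_erase_of_mem (Finset.mem_univ _), Finset.card_univ]
        calc ∑ h ∈ Finset.univ.erase (1 : H), Fintype.card (MulAction.fixedBy Ω h)
            ≤ (Finset.univ.erase (1 : H)).card • (k - 1) := by
              apply Finset.sum_le_card_nsmul
              intro x hx
              have hxne : ((x : A) : Equiv.Perm Ω) ≠ 1 := by
                intro hone
                have : x = 1 := Subtype.ext (Subtype.ext hone)
                exact (Finset.ne_of_mem_erase hx) this
              have h16 := aux_fixed_le hS hindis ((x : A) : Equiv.Perm Ω) ((x : A)).2 hxne
              rw [← Nat.card_eq_fintype_card, Nat.card_coe_set_eq]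
              exact h16
          _ = (m - 1) * (k - 1) := by rw [smul_eq_mul, hcard]
      omega
    -- bound on the number of points
    have hnle : Fintype.card Ω ≤ 1 + (S.ncard - 1) * k := by
      have huniv : (Set.univ : Set Ω) ⊆ ⋃ s' ∈ hSfin.toFinset, pointSet a s' := by
        intro x _
        obtain ⟨t, ht, hpt⟩ := hS.1.cover (a, x)
        exact Set.mem_biUnion (hSfin.mem_toFinset.mpr ht) hpt
      have h9 : Fintype.card Ω ≤ ∑ s' ∈ hSfin.toFinset, (pointSet a s').ncard := by
        calc Fintype.card Ω = (Set.univ : Set Ω).ncard := by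
              rw [Set.ncard_univ, Nat.card_eq_fintype_card]
          _ ≤ (⋃ s' ∈ hSfin.toFinset, pointSet a s').ncard :=
              Set.ncard_le_ncard huniv (Set.toFinite _)
          _ ≤ _ := aux_ncard_biUnion_le _ _
      have hdiagmem : diagRel Ω ∈ hSfin.toFinset := hSfin.mem_toFinset.mpr hS.2
      rw [← Finset.sum_erase_add _ _ hdiagmem] at h9
      have hdiagcard : (pointSet a (diagRel Ω)).ncard = 1 := by
        have h17 : pointSet a (diagRel Ω) = {a} := by
          ext x
          constructor
          · intro h; exact (show a = x from h).symm
          · intro h; exact (show a = x from (h : x = a).symm)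
        rw [h17, Set.ncard_singleton]
      have herased : ∑ s' ∈ hSfin.toFinset.erase (diagRel Ω), (pointSet a s').ncard
          = (S.ncard - 1) * k := by
        have h18 : ∀ s' ∈ hSfin.toFinset.erase (diagRel Ω), (pointSet a s').ncard = k := by
          intro s' hs'
          exact heq s' (hSfin.mem_toFinset.mp (Finset.mem_of_mem_erase hs'))
            (Finset.ne_of_mem_erase hs') a
        rw [Finset.sum_congr rfl h18, Finset.sum_const, smul_eq_mul,
          Finset.card_erase_of_mem hdiagmem, ← Set.ncard_eq_toFinset_card S hSfin]
      omega
    -- put everything together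
    have hkey : S.ncard * m ≤ 1 + (S.ncard - 1) * k + (m - 1) * (k - 1) := by
      calc S.ncard * m ≤ Fintype.card (Quotient (MulAction.orbitRel H Ω)) * m :=
            Nat.mul_le_mul_right _ hrN
        _ = ∑ h : H, Fintype.card (MulAction.fixedBy Ω h) := hburn.symm
        _ ≤ Fintype.card Ω + (m - 1) * (k - 1) := hsum_le
        _ ≤ 1 + (S.ncard - 1) * k + (m - 1) * (k - 1) := Nat.add_le_add_right hnle _
    -- final arithmetic contradiction
    obtain ⟨k', rfl⟩ : ∃ k', k = k' + 1 := ⟨k - 1, by omega⟩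
    have hk' : 1 ≤ k' := by omega
    obtain ⟨mm, hmm⟩ : ∃ mm, m = 2 * k' + 2 + mm := ⟨m - (2 * k' + 2), by omega⟩
    obtain ⟨rr, hrr⟩ : ∃ rr, S.ncard = 2 * k' + 1 + rr := ⟨S.ncard - (2 * k' + 1), by omega⟩
    rw [hmm, hrr] at hkey
    have e1 : 2 * k' + 1 + rr - 1 = 2 * k' + rr := by omega
    have e2 : 2 * k' + 2 + mm - 1 = 2 * k' + 1 + mm := by omega
    have e3 : k' + 1 - 1 = k' := by omega
    rw [e1, e2, e3] at hkey
    nlinarith [hkey, hk', Nat.zero_le (mm * rr), Nat.zero_le (k' * mm), Nat.zero_le (k' * rr)]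

  exact ⟨A, hmemA, ⟨htransA, hcond2, hcond3⟩, h5⟩

end AS
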